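/- Structural characterisation (full theorem): let φ = C₁ ∧ ⋯ ∧ C_m (m ≥ 1) be a conjunctive normal form in which each clause C_i is a disjunction of at least one literal whose underlying atoms are pairwise distinct, and assume that whenever m ≥ 2 there exist an index j and a world w with w ⊨ C_j and w ⊭ φ (logical independence of the clauses; here for m = 1 the conjunction is just C₁). Then φ is atomic if and only if m = 1, i.e. if and only if φ is a single clause. -/

import Mathlib

/-- Propositional formulas over atoms `V`: `var v | ¬φ | φ ∧ φ | φ ∨ φ`. -/
inductive PropForm (V : Type*) where
  | var : V → PropForm V
  | not : PropForm V → PropForm V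
  | and : PropForm V → PropForm V → PropForm V
  | or  : PropForm V → PropForm V → PropForm V

namespace PropForm

variable {V : Type*}

/-- Boolean semantics: `w ⊨ φ`. -/
def eval (w : V → Bool) : PropForm V → Bool
  | var v => w v
  | not φ => !(eval w φ)
  | and φ ψ => eval w φ && eval w ψ
  | or φ ψ => eval w φ || eval w ψ

end PropForm

variable {V : Type*}

/-- `Content φ` : the finite set of worlds (valuations `V → Bool`) satisfying `φ`. -/
def Content [Fintype V] [DecidableEq V] (φ : PropForm V) : Finset (V → Bool) :=
  Finset.univ.filter fun w => φ.eval w = true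

/-- Information content `I(φ) = -log₂(|Content φ| / 2 ^ n)` in the extended reals,
with `I(φ) = +∞` when `Content φ = ∅`. -/
noncomputable def infoContent [Fintype V] [DecidableEq V] (φ : PropForm V) : EReal :=
  if (Content φ).card = 0 then ⊤
  else (((- Real.logb 2 (((Content φ).card : ℝ) / 2 ^ Fintype.card V)) : ℝ) : EReal)

/-- The disjunction `D 0 ∨ D 1 ∨ ⋯ ∨ D (k-1)` (left-associated), for `k ≥ 1`. -/
def bigOr {k : ℕ} (hk : 0 < k) (D : Fin k → PropForm V) : PropForm V :=
  ((List.ofFn D).tail).foldl PropForm.or (D ⟨0, hk⟩)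

/-- The conjunction `C 0 ∧ C 1 ∧ ⋯ ∧ C (m-1)` (left-associated), for `m ≥ 1`. -/
def bigAnd {m : ℕ} (hm : 0 < m) (C : Fin m → PropForm V) : PropForm V :=
  ((List.ofFn C).tail).foldl PropForm.and (C ⟨0, hm⟩)

/-- The disjunction `⋁_{i ∈ S} D i` over a nonempty finite index set `S`. -/
noncomputable def finsetOr {k : ℕ} (D : Fin k → PropForm V) (S : Finset (Fin k)) (hS : S.Nonempty) :
    PropForm V :=
  (((S.erase (S.min' hS)).toList).map D).foldl PropForm.or (D (S.min' hS))

/-- A literal: a positive or negated atom. -/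
inductive Literal (V : Type*) where
  | pos : V → Literal V
  | neg : V → Literal V

/-- The underlying atom of a literal. -/
def Literal.atom : Literal V → V
  | .pos v => v
  | .neg v => v

/-- The formula corresponding to a literal. -/
def Literal.toForm : Literal V → PropForm V
  | .pos v => .var v
  | .neg v => .not (.var v)

/-- `φ` is a literal formula: `var v` or `¬(var v)`. -/
inductive IsLiteral : PropForm V → Prop
  | var (v : V) : IsLiteral (.var v)
  | negVar (v : V) : IsLiteral (.not (.var v))

/-- `φ` is a clause: a finite disjunction of literals. -/
inductive IsClause : PropForm V → Prop
  | lit {φ : PropForm V} : IsLiteral φ → IsClause φ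
  | or {φ ψ : PropForm V} : IsClause φ → IsClause ψ → IsClause (φ.or ψ)

/-- Immediate (direct) subformula relation. -/
inductive DirectSubform : PropForm V → PropForm V → Prop
  | notArg (φ : PropForm V) : DirectSubform φ (.not φ)
  | andLeft (φ ψ : PropForm V) : DirectSubform φ (.and φ ψ)
  | andRight (φ ψ : PropForm V) : DirectSubform ψ (.and φ ψ)
  | orLeft (φ ψ : PropForm V) : DirectSubform φ (.or φ ψ)
  | orRight (φ ψ : PropForm V) : DirectSubform ψ (.or φ ψ)

/-- `ψ` is a strict subformula of `φ`. -/
def StrictSubform (ψ φ : PropForm V) : Prop := Relation.TransGen DirectSubform ψ φ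

/-- `φ` is atomic: it admits no safe cut, i.e. every strict subformula `ψ`
satisfies `I(ψ) ≥ I(φ)`. -/
def Atomic [Fintype V] [DecidableEq V] (φ : PropForm V) : Prop :=
  ∀ ψ : PropForm V, StrictSubform ψ φ → infoContent φ ≤ infoContent ψ

section Helpers
variable {V : Type*} [Fintype V] [DecidableEq V]

lemma mem_Content {φ : PropForm V} {w : V → Bool} : w ∈ Content φ ↔ φ.eval w = true := by
  simp [Content]

lemma content_or_left (φ ψ : PropForm V) : Content φ ⊆ Content (φ.or ψ) := by
  intro w hw; simp [mem_Content, PropForm.eval] at *; tauto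

lemma content_or_right (φ ψ : PropForm V) : Content ψ ⊆ Content (φ.or ψ) := by
  intro w hw; simp [mem_Content, PropForm.eval] at *; tauto

lemma card_content_not_var (v : V) :
    (Content (PropForm.not (PropForm.var v))).card = (Content (PropForm.var v)).card := by
  refine Finset.card_bij' (fun w _ => Function.update w v (!(w v)))
      (fun w _ => Function.update w v (!(w v))) ?_ ?_ ?_ ?_
  · intro w hw
    simp only [mem_Content, PropForm.eval] at hw ⊢
    try simp at hw
    simp [hw]
  · intro w hw
    simp only [mem_Content, PropForm.eval] at hw ⊢
    try simp at hw
    simp [hw]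
  · intro w hw
    funext x
    by_cases hx : x = v <;> simp [hx, Function.update]
  · intro w hw
    funext x
    by_cases hx : x = v <;> simp [hx, Function.update]

omit [Fintype V] [DecidableEq V] in
lemma no_strictSubform_var {ψ : PropForm V} {v : V} : ¬ StrictSubform ψ (.var v) := by
  intro h
  cases h with
  | single h => cases h
  | tail _ h => cases h

lemma clause_subform_card {φ : PropForm V} (hφ : IsClause φ) :
    ∀ ψ, StrictSubform ψ φ → (Content ψ).card ≤ (Content φ).card := by
  induction hφ with
  | lit hl =>
    cases hl with
    | var v => exact fun ψ h => absurd h no_strictSubform_var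
    | negVar v =>
      intro ψ h
      cases h with
      | single h => cases h; exact (card_content_not_var v).ge
      | tail h' h => cases h; exact absurd h' no_strictSubform_var
  | or h1 h2 ih1 ih2 =>
    intro ψ h
    cases h with
    | single h =>
      cases h with
      | orLeft => exact Finset.card_le_card (content_or_left _ _)
      | orRight => exact Finset.card_le_card (content_or_right _ _)
    | tail h' h =>
      cases h with
      | orLeft => exact (ih1 _ h').trans (Finset.card_le_card (content_or_left _ _))
      | orRight => exact (ih2 _ h').trans (Finset.card_le_card (content_or_right _ _))

end Helpers

section Helpers2
variable {V : Type*}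

lemma eval_foldl_and (w : V → Bool) (l : List (PropForm V)) (a : PropForm V) :
    (l.foldl PropForm.and a).eval w = true ↔
      a.eval w = true ∧ ∀ b ∈ l, b.eval w = true := by
  induction l generalizing a with
  | nil => simp
  | cons b l ih =>
    simp only [List.foldl_cons, ih, PropForm.eval, Bool.and_eq_true, List.mem_cons]
    constructor
    · rintro ⟨⟨h1, h2⟩, h3⟩
      exact ⟨h1, fun c hc => hc.elim (fun h => h ▸ h2) (h3 c)⟩
    · rintro ⟨h1, h2⟩
      exact ⟨⟨h1, h2 b (Or.inl rfl)⟩, fun c hc => h2 c (Or.inr hc)⟩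

lemma eval_foldl_or (w : V → Bool) (l : List (PropForm V)) (a : PropForm V)
    (ha : a.eval w = true) : (l.foldl PropForm.or a).eval w = true := by
  induction l generalizing a with
  | nil => exact ha
  | cons b l ih =>
    exact ih _ (by simp [PropForm.eval, ha])

lemma strictSubform_foldl_and (l : List (PropForm V)) (a : PropForm V) (hl : l ≠ []) :
    StrictSubform a (l.foldl PropForm.and a) ∧
      ∀ b ∈ l, StrictSubform b (l.foldl PropForm.and a) := by
  induction l generalizing a with
  | nil => exact absurd rfl hl
  | cons b l ih =>
    simp only [List.foldl_cons]
    rcases eq_or_ne l [] with rfl | hne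
    · refine ⟨Relation.TransGen.single (DirectSubform.andLeft a b), ?_⟩
      intro c hc
      simp at hc
      exact hc ▸ Relation.TransGen.single (DirectSubform.andRight a c)
    · obtain ⟨h1, h2⟩ := ih (a.and b) hne
      refine ⟨(Relation.TransGen.single (DirectSubform.andLeft a b)).trans h1, ?_⟩
      intro c hc
      rcases List.mem_cons.mp hc with rfl | hc
      · exact (Relation.TransGen.single (DirectSubform.andRight a c)).trans h1
      · exact h2 c hc

lemma isClause_foldl_or (l : List (PropForm V)) (a : PropForm V)
    (ha : IsClause a) (hl : ∀ b ∈ l, IsClause b) : IsClause (l.foldl PropForm.or a) := by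
  induction l generalizing a with
  | nil => exact ha
  | cons b l ih =>
    exact ih _ (IsClause.or ha (hl b List.mem_cons_self))
      (fun c hc => hl c (List.mem_cons_of_mem _ hc))

end Helpers2

section Helpers3
variable {V : Type*} [Fintype V] [DecidableEq V]

lemma info_le {φ ψ : PropForm V} (h0 : 0 < (Content φ).card)
    (hle : (Content ψ).card ≤ (Content φ).card) : infoContent φ ≤ infoContent ψ := by
  unfold infoContent
  rw [if_neg h0.ne']
  by_cases hψ : (Content ψ).card = 0
  · rw [if_pos hψ]; exact le_top
  · rw [if_neg hψ]
    have hψ' : (0:ℝ) < (Content ψ).card := by positivity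
    have hφ' : (0:ℝ) < (Content φ).card := by exact_mod_cast h0
    rw [EReal.coe_le_coe_iff, neg_le_neg_iff,
      Real.logb_le_logb one_lt_two (by positivity) (by positivity)]
    gcongr

lemma info_lt {φ ψ : PropForm V} (h : (Content φ).card < (Content ψ).card) :
    infoContent ψ < infoContent φ := by
  unfold infoContent
  have hψ : (Content ψ).card ≠ 0 := by omega
  rw [if_neg hψ]
  by_cases h0 : (Content φ).card = 0
  · rw [if_pos h0]; exact EReal.coe_lt_top _
  · rw [if_neg h0]
    rw [EReal.coe_lt_coe_iff, neg_lt_neg_iff]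
    have hψ' : (0:ℝ) < (Content ψ).card := by
      have : 0 < (Content ψ).card := Nat.pos_of_ne_zero hψ
      exact_mod_cast this
    apply Real.logb_lt_logb one_lt_two (by positivity)
    gcongr

end Helpers3

lemma isLiteral_toForm {V : Type*} (l : Literal V) : IsLiteral l.toForm := by
  cases l
  · exact IsLiteral.var _
  · exact IsLiteral.negVar _

lemma literal_sat {V : Type*} (l : Literal V) : ∃ w : V → Bool, l.toForm.eval w = true := by
  cases l
  · exact ⟨fun _ => true, rfl⟩
  · exact ⟨fun _ => false, rfl⟩

/-- Structural characterisation (full theorem): let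
`φ = C 0 ∧ ⋯ ∧ C (m-1)` (`m ≥ 1`) be a CNF whose clauses are each a disjunction of
at least one literal with pairwise distinct atoms, and assume that whenever `m ≥ 2`
some world satisfies one clause `C j` but not `φ` (logical independence).
Then `φ` is atomic if and only if `m = 1`, i.e. iff `φ` is a single clause. -/
theorem atomic_iff_single_clause {V : Type*} [Fintype V] [DecidableEq V] {m : ℕ}
    (hm : 0 < m) (C : Fin m → PropForm V)
    (hC : ∀ i, ∃ (k : ℕ) (hk : 0 < k) (L : Fin k → Literal V),
      (Function.Injective fun i => (L i).atom) ∧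
        C i = bigOr hk fun i => (L i).toForm)
    (hind : 2 ≤ m → ∃ (j : Fin m) (w : V → Bool),
      (C j).eval w = true ∧ (bigAnd hm C).eval w = false) :
    Atomic (bigAnd hm C) ↔ m = 1 := by
  obtain ⟨m', rfl⟩ : ∃ m', m = m' + 1 := ⟨m - 1, by omega⟩
  have htail : (List.ofFn C).tail = List.ofFn (fun i : Fin m' => C i.succ) := by
    rw [List.ofFn_succ, List.tail_cons]
  constructor
  · intro hA
    by_contra hne
    have hm2 : (2:ℕ) ≤ m' + 1 := by omega
    obtain ⟨j, w, hwC, hwφ⟩ := hind hm2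
    have hlne : (List.ofFn C).tail ≠ [] := by
      rw [htail]
      simp only [ne_eq, List.ofFn_eq_nil_iff]
      omega
    obtain ⟨hsub0, hsubtail⟩ := strictSubform_foldl_and ((List.ofFn C).tail) (C ⟨0, hm⟩) hlne
    have hmemtail : ∀ i : Fin (m' + 1), i ≠ ⟨0, hm⟩ → C i ∈ (List.ofFn C).tail := by
      intro i hi
      rw [htail, List.mem_ofFn]
      have hi0 : i ≠ 0 := hi
      exact ⟨i.pred hi0, by simp⟩
    have hsub : StrictSubform (C j) (bigAnd hm C) := by
      by_cases hj : j = ⟨0, hm⟩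
      · exact hj ▸ hsub0
      · exact hsubtail _ (hmemtail j hj)
    have hss : Content (bigAnd hm C) ⊂ Content (C j) := by
      constructor
      · intro u hu
        rw [mem_Content] at hu ⊢
        unfold bigAnd at hu
        rw [eval_foldl_and] at hu
        obtain ⟨h1, h2⟩ := hu
        by_cases hj : j = ⟨0, hm⟩
        · exact hj ▸ h1
        · exact h2 _ (hmemtail j hj)
      · intro hsup
        have hw := hsup (mem_Content.mpr hwC)
        rw [mem_Content, hwφ] at hw
        exact Bool.false_ne_true hw
    exact absurd (hA (C j) hsub) (not_le.mpr (info_lt (Finset.card_lt_card hss)))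
  · intro h1
    have hm' : m' = 0 := by omega
    subst hm'
    have hb : bigAnd hm C = C ⟨0, hm⟩ := by
      unfold bigAnd
      rw [htail]
      simp
    obtain ⟨k, hk, L, hinj, hCeq⟩ := hC ⟨0, hm⟩
    have hcl : IsClause (C ⟨0, hm⟩) := by
      rw [hCeq]
      unfold bigOr
      apply isClause_foldl_or
      · exact IsClause.lit (isLiteral_toForm _)
      · intro b hb
        obtain ⟨i, hi⟩ := List.mem_ofFn.mp (List.mem_of_mem_tail hb)
        exact hi ▸ IsClause.lit (isLiteral_toForm _)
    obtain ⟨w₀, hw₀⟩ := literal_sat (L ⟨0, hk⟩)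
    have h0 : 0 < (Content (C ⟨0, hm⟩)).card := by
      apply Finset.card_pos.mpr
      refine ⟨w₀, mem_Content.mpr ?_⟩
      rw [hCeq]
      exact eval_foldl_or _ _ _ hw₀
    intro ψ hψ
    rw [hb] at hψ ⊢
    exact info_le h0 (clause_subform_card hcl ψ hψ)
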